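/- Let H = (V, E) be a hypergraph on n vertices with hyperedges E_1, ..., E_m (finite sets of vertices), and suppose every hyperedge E_i has at least k vertices, where k ≥ 100. Then the signed discrepancy of H satisfies SD(H) ≤ 4·√(ln k / k)·n + m/k. -/

import Mathlib

/-- `g : V → ℤ` is a signed domination function of the hypergraph with hyperedges `E i`:
it takes values in `{-1, +1}` and sums to at least `1` over every hyperedge. -/
def Hypergraph.IsSignedDominationFunction {V : Type*} {m : ℕ}
    (E : Fin m → Finset V) (g : V → ℤ) : Prop :=
  (∀ v, g v = 1 ∨ g v = -1) ∧ ∀ i : Fin m, 1 ≤ ∑ v ∈ E i, g v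

/-- The signed discrepancy `SD(H)` of the hypergraph with vertex set `V`
and hyperedges `E 1, …, E m`. -/
noncomputable def Hypergraph.signedDiscrepancy {V : Type*} [Fintype V] {m : ℕ}
    (E : Fin m → Finset V) : ℤ :=
  sInf {s : ℤ | ∃ g : V → ℤ, Hypergraph.IsSignedDominationFunction E g ∧ s = ∑ v, g v}

namespace SDAux

open Finset

set_option linter.unusedSectionVars false

/-- `log K < K / 8` for `K ≥ 100`. -/
lemma log_lt_eighth (K : ℝ) (hK : (100:ℝ) ≤ K) : Real.log K < K / 8 := by
  have hK0 : (0:ℝ) < K := by linarith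
  set t : ℝ := K ^ ((1:ℝ)/4) with ht
  have ht0 : 0 < t := Real.rpow_pos_of_pos hK0 _
  have ht4 : t ^ 4 = K := by
    rw [ht, ← Real.rpow_natCast (K ^ ((1:ℝ)/4)) 4, ← Real.rpow_mul (le_of_lt hK0)]
    norm_num
  have ht3 : 3 ≤ t := by
    by_contra h
    push_neg at h
    have : t ^ 4 < 3 ^ 4 := by
      apply pow_lt_pow_left₀ h (le_of_lt ht0)
      norm_num
    rw [ht4] at this; norm_num at this; linarith
  have hlog : Real.log K = 4 * Real.log t := by
    rw [ht, Real.log_rpow hK0]; ring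
  have hlt : Real.log t ≤ t - 1 := Real.log_le_sub_one_of_pos ht0
  have : 32 * t - 32 < t ^ 4 := by
    nlinarith [sq_nonneg (t - 3), sq_nonneg t, sq_nonneg (t*t - 3*t)]
  rw [hlog, ← ht4]
  nlinarith

/-- the key per-edge tail estimate -/
lemma edge_bound (K : ℝ) (hK : (100:ℝ) ≤ K) (N : ℕ) (hN : K ≤ (N:ℝ)) :
    (N:ℝ) * Real.exp (-(4 * Real.log K / K)) ^ N ≤ 1 / (2*K) := by
  have hK0 : (0:ℝ) < K := by linarith
  have hlog1 : 1 ≤ Real.log K := by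
    rw [Real.le_log_iff_exp_le hK0]
    calc Real.exp 1 ≤ 3 := by
          have := Real.exp_one_lt_d9; linarith
      _ ≤ K := by linarith
  set c : ℝ := 4 * Real.log K / K with hc
  have hcK : c * K = 4 * Real.log K := by
    rw [hc, div_mul_cancel₀ _ hK0.ne']
  have hc1 : 1/K ≤ c := by
    rw [hc, div_le_div_iff₀ hK0 hK0]
    nlinarith
  have hexp : Real.exp (-c) ^ N = Real.exp (-(c * N)) := by
    rw [← Real.exp_nat_mul]; ring_nf
  have h1 : (N:ℝ) ≤ K * Real.exp (c * N - c * K) := by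
    have he : c * ((N:ℝ) - K) + 1 ≤ Real.exp (c * ((N:ℝ) - K)) := Real.add_one_le_exp _
    have hNK : (0:ℝ) ≤ (N:ℝ) - K := by linarith
    have hck : (1/K) * ((N:ℝ) - K) ≤ c * ((N:ℝ) - K) := mul_le_mul_of_nonneg_right hc1 hNK
    have : (N:ℝ)/K ≤ Real.exp (c * ((N:ℝ) - K)) := by
      have : (N:ℝ)/K = 1 + (1/K) * ((N:ℝ) - K) := by field_simp; ring
      rw [this]; linarith
    calc (N:ℝ) = K * ((N:ℝ)/K) := by field_simp
      _ ≤ K * Real.exp (c * ((N:ℝ) - K)) := mul_le_mul_of_nonneg_left this hK0.le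
      _ = K * Real.exp (c * N - c * K) := by ring_nf
  have h2 : (N:ℝ) * Real.exp (-(c * N)) ≤ K * Real.exp (-(c * K)) := by
    calc (N:ℝ) * Real.exp (-(c * N)) ≤ (K * Real.exp (c * N - c * K)) * Real.exp (-(c * N)) := by
          apply mul_le_mul_of_nonneg_right h1 (Real.exp_pos _).le
      _ = K * Real.exp (-(c * K)) := by
          rw [mul_assoc, ← Real.exp_add]; ring_nf
  have h3 : K * Real.exp (-(c * K)) = 1 / K ^ 3 := by
    rw [hcK]
    rw [show (4:ℝ) * Real.log K = (4:ℕ) * Real.log K by norm_num, Real.exp_neg, Real.exp_nat_mul,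
      Real.exp_log hK0]
    field_simp
  have h4 : 1 / K ^ 3 ≤ 1 / (2 * K) := by
    apply div_le_div_of_nonneg_left (by norm_num) (by positivity)
    nlinarith [sq_nonneg K]
  calc (N:ℝ) * Real.exp (-(4 * Real.log K / K)) ^ N = (N:ℝ) * Real.exp (-(c*N)) := by
        rw [← hc, hexp]
    _ ≤ K * Real.exp (-(c*K)) := h2
    _ ≤ 1/(2*K) := by rw [h3]; exact h4

lemma sum_prod_bool {V : Type*} [Fintype V] [DecidableEq V] (c : V → Bool → ℝ) :
    ∑ f : V → Bool, ∏ v, c v (f v) = ∏ v, (c v true + c v false) := by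
  have := Finset.prod_univ_sum (fun _ : V => (Finset.univ : Finset Bool)) (fun v b => c v b)
  rw [Fintype.piFinset_univ] at this
  rw [← this]
  congr 1; ext v; simp

variable {V : Type*} [Fintype V] {m : ℕ}

/-- the random ±1 assignment -/
def gee (f : V → Bool) (v : V) : ℤ := if f v then 1 else -1

/-- edge `i` is bad for `f` -/
def bad (E : Fin m → Finset V) (f : V → Bool) (i : Fin m) : Prop :=
  ∑ v ∈ E i, gee f v ≤ 0

instance (E : Fin m → Finset V) (f : V → Bool) (i : Fin m) : Decidable (bad E f i) := by
  unfold bad; infer_instance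

open Classical in
/-- the repaired assignment -/
noncomputable def rep (E : Fin m → Finset V) (f : V → Bool) (v : V) : ℤ :=
  if (∃ i, bad E f i ∧ v ∈ E i) ∧ f v = false then 1 else gee f v

lemma gee_le_rep (E : Fin m → Finset V) (f : V → Bool) (v : V) :
    gee f v ≤ rep E f v := by
  classical
  unfold rep
  split
  · rename_i h
    simp [gee, h.2]
  · exact le_refl _

lemma rep_sdf (E : Fin m → Finset V) (f : V → Bool) (k : ℕ) (hk : 1 ≤ k)
    (hE : ∀ i : Fin m, k ≤ (E i).card) :
    Hypergraph.IsSignedDominationFunction E (rep E f) := by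
  classical
  constructor
  · intro v
    unfold rep
    split
    · exact Or.inl rfl
    · unfold gee; by_cases h : f v <;> simp [h]
  · intro i
    by_cases hb : bad E f i
    · have h1 : ∀ v ∈ E i, rep E f v = 1 := by
        intro v hv
        unfold rep
        split
        · rfl
        · rename_i h
          push_neg at h
          by_cases hfv : f v
          · simp [gee, hfv]
          · exact absurd (eq_false_of_ne_true (by simpa using hfv)) (by
              intro hfalse
              exact absurd hfalse (h ⟨i, hb, hv⟩))
      rw [Finset.sum_congr rfl h1, Finset.sum_const, nsmul_eq_mul, mul_one]
      have := hE i
      exact_mod_cast le_trans hk this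
    · unfold bad at hb
      push_neg at hb
      calc (1:ℤ) ≤ ∑ v ∈ E i, gee f v := hb
        _ ≤ ∑ v ∈ E i, rep E f v := Finset.sum_le_sum (fun v _ => gee_le_rep E f v)

lemma rep_sum_le (E : Fin m → Finset V) (f : V → Bool) :
    ∑ v, rep E f v ≤ ∑ v, gee f v + 2 * ∑ i, (if bad E f i then ((E i).card : ℤ) else 0) := by
  classical
  have hdiff : ∀ v, rep E f v - gee f v ≤
      (if (∃ i, bad E f i ∧ v ∈ E i) ∧ f v = false then (2:ℤ) else 0) := by
    intro v
    unfold rep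
    split
    · rename_i h
      simp [gee, h.2]
    · simp
  have h1 : ∑ v, (rep E f v - gee f v) ≤
      ∑ v, (if (∃ i, bad E f i ∧ v ∈ E i) ∧ f v = false then (2:ℤ) else 0) :=
    Finset.sum_le_sum (fun v _ => hdiff v)
  have h2 : ∑ v, (if (∃ i, bad E f i ∧ v ∈ E i) ∧ f v = false then (2:ℤ) else 0) =
      2 * ((Finset.univ.filter
        (fun v => (∃ i, bad E f i ∧ v ∈ E i) ∧ f v = false)).card : ℤ) := by
    rw [← Finset.sum_filter]
    rw [Finset.sum_const, nsmul_eq_mul]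
    push_cast
    ring
  have h3 : (Finset.univ.filter
        (fun v => (∃ i, bad E f i ∧ v ∈ E i) ∧ f v = false)).card ≤
      ∑ i, (if bad E f i then (E i).card else 0) := by
    calc (Finset.univ.filter
        (fun v => (∃ i, bad E f i ∧ v ∈ E i) ∧ f v = false)).card
        ≤ ((Finset.univ.filter (fun i => bad E f i)).biUnion E).card := by
          apply Finset.card_le_card
          intro v hv
          simp only [Finset.mem_filter, Finset.mem_univ, true_and] at hv
          obtain ⟨⟨i, hbi, hvi⟩, _⟩ := hv
          simp only [Finset.mem_biUnion, Finset.mem_filter, Finset.mem_univ, true_and]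
          exact ⟨i, hbi, hvi⟩
      _ ≤ ∑ i ∈ Finset.univ.filter (fun i => bad E f i), (E i).card :=
          Finset.card_biUnion_le
      _ = ∑ i, (if bad E f i then (E i).card else 0) := by
          rw [Finset.sum_filter]
  have h4 : ((∑ i, (if bad E f i then (E i).card else 0) : ℕ) : ℤ) =
      ∑ i, (if bad E f i then ((E i).card : ℤ) else 0) := by
    push_cast
    rfl
  have h5 : ∑ v, (rep E f v - gee f v) = ∑ v, rep E f v - ∑ v, gee f v :=
    Finset.sum_sub_distrib _ _
  have h3' : ((Finset.univ.filter
        (fun v => (∃ i, bad E f i ∧ v ∈ E i) ∧ f v = false)).card : ℤ) ≤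
      ((∑ i, (if bad E f i then (E i).card else 0) : ℕ) : ℤ) := by exact_mod_cast h3
  rw [h4] at h3'
  linarith

/-- the product weight of an assignment -/
noncomputable def wt (p q : ℝ) (f : V → Bool) : ℝ := ∏ v, (if f v then q else p)

variable [DecidableEq V] {p q : ℝ}

lemma wt_pos (hp : 0 < p) (hq : 0 < q) (f : V → Bool) : 0 < wt p q f :=
  Finset.prod_pos (fun v _ => by by_cases h : f v <;> simp [h, hp, hq])

lemma wt_sum (hpq : p + q = 1) : ∑ f : V → Bool, wt p q f = 1 := by
  unfold wt
  rw [sum_prod_bool (fun v b => if b then q else p)]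
  simp [show q + p = (1:ℝ) by linarith]

lemma exp_gee (hpq : p + q = 1) (v₀ : V) :
    ∑ f : V → Bool, wt p q f * ((gee f v₀ : ℤ) : ℝ) = q - p := by
  set c : V → Bool → ℝ := fun v b =>
    (if b then q else p) * (if v = v₀ then (if b then (1:ℝ) else -1) else 1) with hc
  have key : ∀ f : V → Bool, wt p q f * ((gee f v₀ : ℤ) : ℝ) = ∏ v, c v (f v) := by
    intro f
    simp only [hc]
    rw [Finset.prod_mul_distrib]
    unfold wt
    congr 1
    rw [Finset.prod_ite_eq' Finset.univ v₀ (fun v => if f v then (1:ℝ) else -1)]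
    by_cases h : f v₀ <;> simp [gee, h]
  rw [Finset.sum_congr rfl (fun f _ => key f), sum_prod_bool c]
  have hcv : ∀ v : V, c v true + c v false = (if v = v₀ then q - p else 1) := by
    intro v
    by_cases h : v = v₀ <;> simp [hc, h] <;> linarith
  rw [Finset.prod_congr rfl (fun v _ => hcv v),
    Finset.prod_ite_eq' Finset.univ v₀ (fun _ => q - p)]
  simp

lemma exp_edge (hpq : p + q = 1) (S : Finset V) (r : ℝ) :
    ∑ f : V → Bool, wt p q f * ∏ v ∈ S, (if f v then r⁻¹ else r) =
      (q * r⁻¹ + p * r) ^ S.card := by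
  set c : V → Bool → ℝ := fun v b =>
    (if b then q else p) * (if v ∈ S then (if b then r⁻¹ else r) else 1) with hc
  have key : ∀ f : V → Bool, wt p q f * ∏ v ∈ S, (if f v then r⁻¹ else r) = ∏ v, c v (f v) := by
    intro f
    simp only [hc]
    rw [Finset.prod_mul_distrib]
    unfold wt
    congr 1
    rw [Fintype.prod_ite_mem S (fun v => if f v then r⁻¹ else r)]
  rw [Finset.sum_congr rfl (fun f _ => key f), sum_prod_bool c]
  have hcv : ∀ v : V, c v true + c v false = (if v ∈ S then q * r⁻¹ + p * r else 1) := by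
    intro v
    by_cases h : v ∈ S <;> simp [hc, h]
    linarith
  rw [Finset.prod_congr rfl (fun v _ => hcv v), Fintype.prod_ite_mem S (fun _ => q * r⁻¹ + p * r),
    Finset.prod_const]

lemma bad_le_prod {r : ℝ} (hr : 1 ≤ r) (E : Fin m → Finset V)
    (f : V → Bool) (i : Fin m) :
    (if bad E f i then ((E i).card : ℝ) else 0) ≤
      ((E i).card : ℝ) * ∏ v ∈ E i, (if f v then r⁻¹ else r) := by
  have hr0 : (0:ℝ) < r := lt_of_lt_of_le one_pos hr
  split
  · rename_i hb
    set a := ((E i).filter (fun v => f v = true)).card with ha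
    set b := ((E i).filter (fun v => ¬ f v = true)).card with hb'
    have hsum : ∑ v ∈ E i, gee f v = (a : ℤ) - (b : ℤ) := by
      rw [← Finset.sum_filter_add_sum_filter_not (E i) (fun v => f v = true) (gee f)]
      have e1 : ∑ v ∈ (E i).filter (fun v => f v = true), gee f v = (a : ℤ) := by
        rw [Finset.sum_congr rfl (fun v hv => by
          simp only [Finset.mem_filter] at hv
          simp [gee, hv.2] : ∀ v ∈ (E i).filter (fun v => f v = true), gee f v = 1)]
        simp [ha]
      have e2 : ∑ v ∈ (E i).filter (fun v => ¬ f v = true), gee f v = -(b : ℤ) := by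
        rw [Finset.sum_congr rfl (fun v hv => by
          simp only [Finset.mem_filter] at hv
          simp [gee, hv.2] : ∀ v ∈ (E i).filter (fun v => ¬ f v = true), gee f v = -1)]
        simp [hb']
      rw [e1, e2]; ring
    have hab : a ≤ b := by
      unfold bad at hb
      rw [hsum] at hb
      omega
    have hprod : ∏ v ∈ E i, (if f v then r⁻¹ else r) = r⁻¹ ^ a * r ^ b := by
      rw [Finset.prod_ite]
      simp [ha, hb']
    have hone : (1:ℝ) ≤ ∏ v ∈ E i, (if f v then r⁻¹ else r) := by
      rw [hprod, inv_pow, inv_mul_eq_div, le_div_iff₀ (pow_pos hr0 a), one_mul]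
      exact pow_le_pow_right₀ hr hab
    exact le_mul_of_one_le_right (Nat.cast_nonneg _) hone
  · positivity

end SDAux

set_option maxHeartbeats 1000000 in
theorem signed_discrepancy_upper_bound
    {V : Type*} [Fintype V] (n m k : ℕ) (hn : n = Fintype.card V)
    (E : Fin m → Finset V) (hk : 100 ≤ k) (hE : ∀ i : Fin m, k ≤ (E i).card) :
    (Hypergraph.signedDiscrepancy E : ℝ) ≤
      4 * Real.sqrt (Real.log (k : ℝ) / (k : ℝ)) * (n : ℝ) + (m : ℝ) / (k : ℝ) := by
  classical
  set K : ℝ := (k:ℝ) with hKdef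
  have hK : (100:ℝ) ≤ K := by rw [hKdef]; exact_mod_cast hk
  have hK0 : (0:ℝ) < K := by linarith
  have hlog8 : Real.log K < K / 8 := SDAux.log_lt_eighth K hK
  have hlog1 : 1 ≤ Real.log K := by
    rw [Real.le_log_iff_exp_le hK0]
    calc Real.exp 1 ≤ 3 := by
          have := Real.exp_one_lt_d9; linarith
      _ ≤ K := by linarith
  set δ : ℝ := Real.sqrt (2 * Real.log K / K) with hδdef
  have hδ0 : 0 ≤ δ := Real.sqrt_nonneg _
  have hδsq : δ ^ 2 = 2 * Real.log K / K := Real.sq_sqrt (by positivity)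
  have hδhalf : δ < 1 / 2 := by
    have h1 : δ ^ 2 < 1/4 := by
      rw [hδsq, div_lt_iff₀ hK0]
      linarith
    nlinarith
  set p : ℝ := 1/2 - δ with hpdef
  set q : ℝ := 1/2 + δ with hqdef
  have hp : 0 < p := by rw [hpdef]; linarith
  have hq : 0 < q := by rw [hqdef]; linarith
  have hpq1 : p + q = 1 := by rw [hpdef, hqdef]; ring
  set r : ℝ := Real.sqrt (q / p) with hrdef
  have hr1 : 1 ≤ r := by
    rw [hrdef, show (1:ℝ) = Real.sqrt 1 from Real.sqrt_one.symm]
    apply Real.sqrt_le_sqrt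
    rw [le_div_iff₀ hp]
    rw [hpdef, hqdef]; linarith
  -- the per-vertex factor for the tilted expectation
  have hφ : q * r⁻¹ + p * r = 2 * Real.sqrt (p * q) := by
    have e1 : q * Real.sqrt (p / q) = Real.sqrt (p * q) := by
      nth_rewrite 1 [show q = Real.sqrt (q^2) from (Real.sqrt_sq hq.le).symm]
      rw [← Real.sqrt_mul (by positivity)]
      congr 1
      field_simp
    have e2 : p * Real.sqrt (q / p) = Real.sqrt (p * q) := by
      nth_rewrite 1 [show p = Real.sqrt (p^2) from (Real.sqrt_sq hp.le).symm]
      rw [← Real.sqrt_mul (by positivity)]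
      congr 1
      field_simp
    rw [hrdef, ← Real.sqrt_inv, inv_div, e1, e2]
    ring
  have hφ2 : 2 * Real.sqrt (p * q) ≤ Real.exp (-(4 * Real.log K / K)) := by
    have h4 : 4 * (p * q) = 1 - 4 * δ ^ 2 := by rw [hpdef, hqdef]; ring
    have key : 2 * Real.sqrt (p * q) = Real.sqrt (1 - 4 * δ ^ 2) := by
      have hm : Real.sqrt (4 * (p * q)) = Real.sqrt 4 * Real.sqrt (p * q) :=
        Real.sqrt_mul (by norm_num) _
      have h44 : Real.sqrt 4 = 2 := by
        rw [show (4:ℝ) = 2^2 by norm_num, Real.sqrt_sq (by norm_num : (0:ℝ) ≤ 2)]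
      rw [← h4, hm, h44]
    have hle : 1 - 4 * δ ^ 2 ≤ Real.exp (-(4 * δ ^ 2)) := by
      have := Real.add_one_le_exp (-(4 * δ ^ 2)); linarith
    have hsq : Real.sqrt (Real.exp (-(4 * δ ^ 2))) = Real.exp (-(2 * δ ^ 2)) := by
      rw [show Real.exp (-(4 * δ ^ 2)) = Real.exp (-(2 * δ ^ 2)) ^ 2 from by
        rw [← Real.exp_nat_mul]; ring_nf]
      exact Real.sqrt_sq (Real.exp_pos _).le
    have hδ4 : -(2 * δ ^ 2) = -(4 * Real.log K / K) := by rw [hδsq]; ring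
    calc 2 * Real.sqrt (p * q) = Real.sqrt (1 - 4 * δ ^ 2) := key
      _ ≤ Real.sqrt (Real.exp (-(4 * δ ^ 2))) := Real.sqrt_le_sqrt hle
      _ = Real.exp (-(2 * δ ^ 2)) := hsq
      _ = Real.exp (-(4 * Real.log K / K)) := by rw [hδ4]
  -- weights
  have hwpos : ∀ f : V → Bool, 0 < SDAux.wt p q f := SDAux.wt_pos hp hq
  have hwsum : ∑ f : V → Bool, SDAux.wt p q f = 1 := SDAux.wt_sum hpq1
  -- the cost functional
  set X : (V → Bool) → ℝ := fun f =>
    (∑ v, ((SDAux.gee f v : ℤ) : ℝ)) +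
      2 * ∑ i, (if SDAux.bad E f i then ((E i).card : ℝ) else 0) with hX
  -- expectation bound
  have hA : ∑ f : V → Bool, SDAux.wt p q f * (∑ v, ((SDAux.gee f v : ℤ) : ℝ))
      = (n : ℝ) * (2 * δ) := by
    have : ∀ f : V → Bool, SDAux.wt p q f * (∑ v, ((SDAux.gee f v : ℤ) : ℝ))
        = ∑ v, SDAux.wt p q f * ((SDAux.gee f v : ℤ) : ℝ) := fun f => Finset.mul_sum _ _ _
    rw [Finset.sum_congr rfl (fun f _ => this f), Finset.sum_comm]
    rw [Finset.sum_congr rfl (fun v _ => SDAux.exp_gee hpq1 v)]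
    rw [Finset.sum_const, Finset.card_univ, ← hn, nsmul_eq_mul]
    congr 1
    rw [hpdef, hqdef]; ring
  have hB : ∀ i : Fin m, ∑ f : V → Bool,
      SDAux.wt p q f * (if SDAux.bad E f i then ((E i).card : ℝ) else 0) ≤ 1 / (2 * K) := by
    intro i
    have hNK : K ≤ ((E i).card : ℝ) := by
      rw [hKdef]; exact_mod_cast hE i
    have step1 : ∑ f : V → Bool,
        SDAux.wt p q f * (if SDAux.bad E f i then ((E i).card : ℝ) else 0) ≤
        ∑ f : V → Bool, SDAux.wt p q f *
          (((E i).card : ℝ) * ∏ v ∈ E i, (if f v then r⁻¹ else r)) :=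
      Finset.sum_le_sum (fun f _ =>
        mul_le_mul_of_nonneg_left (SDAux.bad_le_prod hr1 E f i) (hwpos f).le)
    have step2 : ∑ f : V → Bool, SDAux.wt p q f *
          (((E i).card : ℝ) * ∏ v ∈ E i, (if f v then r⁻¹ else r)) =
        ((E i).card : ℝ) * (q * r⁻¹ + p * r) ^ (E i).card := by
      rw [Finset.sum_congr rfl (fun f _ => by
        ring : ∀ f ∈ (Finset.univ : Finset (V → Bool)),
          SDAux.wt p q f * (((E i).card : ℝ) * ∏ v ∈ E i, (if f v then r⁻¹ else r)) =
          ((E i).card : ℝ) * (SDAux.wt p q f * ∏ v ∈ E i, (if f v then r⁻¹ else r)))]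
      rw [← Finset.mul_sum, SDAux.exp_edge hpq1 (E i) r]
    have step3 : ((E i).card : ℝ) * (q * r⁻¹ + p * r) ^ (E i).card ≤ 1 / (2 * K) := by
      have hpow : (q * r⁻¹ + p * r) ^ (E i).card ≤
          Real.exp (-(4 * Real.log K / K)) ^ (E i).card := by
        apply pow_le_pow_left₀ (by positivity)
        rw [hφ]; exact hφ2
      calc ((E i).card : ℝ) * (q * r⁻¹ + p * r) ^ (E i).card
          ≤ ((E i).card : ℝ) * Real.exp (-(4 * Real.log K / K)) ^ (E i).card :=
            mul_le_mul_of_nonneg_left hpow (Nat.cast_nonneg _)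
        _ ≤ 1 / (2 * K) := SDAux.edge_bound K hK _ hNK
    calc ∑ f : V → Bool,
        SDAux.wt p q f * (if SDAux.bad E f i then ((E i).card : ℝ) else 0)
        ≤ ∑ f : V → Bool, SDAux.wt p q f *
          (((E i).card : ℝ) * ∏ v ∈ E i, (if f v then r⁻¹ else r)) := step1
      _ = ((E i).card : ℝ) * (q * r⁻¹ + p * r) ^ (E i).card := step2
      _ ≤ 1 / (2 * K) := step3
  have hEX : ∑ f : V → Bool, SDAux.wt p q f * X f ≤ 2 * δ * n + m / K := by
    have hsplit : ∑ f : V → Bool, SDAux.wt p q f * X f =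
        (∑ f : V → Bool, SDAux.wt p q f * (∑ v, ((SDAux.gee f v : ℤ) : ℝ))) +
        2 * ∑ i, ∑ f : V → Bool,
          SDAux.wt p q f * (if SDAux.bad E f i then ((E i).card : ℝ) else 0) := by
      have hxf : ∀ f : V → Bool, SDAux.wt p q f * X f =
          SDAux.wt p q f * (∑ v, ((SDAux.gee f v : ℤ) : ℝ)) +
          2 * ∑ i, SDAux.wt p q f * (if SDAux.bad E f i then ((E i).card : ℝ) else 0) := by
        intro f
        rw [hX]
        simp only
        simp only [mul_add, Finset.mul_sum]
        congr 1
        exact Finset.sum_congr rfl (fun i _ => by ring)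
      rw [Finset.sum_congr rfl (fun f _ => hxf f), Finset.sum_add_distrib]
      congr 1
      rw [← Finset.mul_sum, Finset.sum_comm]
    rw [hsplit, hA]
    have : 2 * ∑ i : Fin m, ∑ f : V → Bool,
        SDAux.wt p q f * (if SDAux.bad E f i then ((E i).card : ℝ) else 0) ≤
        2 * (m * (1 / (2 * K))) := by
      have h2s : ∑ i : Fin m, (∑ f : V → Bool,
          SDAux.wt p q f * (if SDAux.bad E f i then ((E i).card : ℝ) else 0)) ≤
          ∑ _i : Fin m, 1 / (2 * K) := Finset.sum_le_sum (fun i _ => hB i)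
      rw [Finset.sum_const, Finset.card_univ, Fintype.card_fin, nsmul_eq_mul] at h2s
      linarith
    have hmK : 2 * ((m : ℝ) * (1 / (2 * K))) = m / K := by field_simp
    rw [hmK] at this
    linarith
  -- pick a good assignment
  have hex : ∃ f : V → Bool, X f ≤ 2 * δ * n + m / K := by
    by_contra hcon
    push_neg at hcon
    have hlt : ∑ f : V → Bool, SDAux.wt p q f * (2 * δ * n + m / K) <
        ∑ f : V → Bool, SDAux.wt p q f * X f :=
      Finset.sum_lt_sum_of_nonempty Finset.univ_nonempty (fun f _ =>
        mul_lt_mul_of_pos_left (hcon f) (hwpos f))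
    rw [← Finset.sum_mul, hwsum, one_mul] at hlt
    linarith
  obtain ⟨f, hf⟩ := hex
  -- conclude
  have hsdf : Hypergraph.IsSignedDominationFunction E (SDAux.rep E f) :=
    SDAux.rep_sdf E f k (by omega) hE
  have hmem : (∑ v, SDAux.rep E f v) ∈
      {s : ℤ | ∃ g : V → ℤ, Hypergraph.IsSignedDominationFunction E g ∧ s = ∑ v, g v} :=
    ⟨SDAux.rep E f, hsdf, rfl⟩
  have hbdd : BddBelow
      {s : ℤ | ∃ g : V → ℤ, Hypergraph.IsSignedDominationFunction E g ∧ s = ∑ v, g v} := by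
    refine ⟨-(Fintype.card V : ℤ), ?_⟩
    rintro s ⟨g0, hg0, rfl⟩
    have hg1 : ∀ v : V, -1 ≤ g0 v := fun v => by rcases hg0.1 v with h | h <;> omega
    calc -(Fintype.card V : ℤ) = ∑ _v : V, (-1 : ℤ) := by simp
      _ ≤ ∑ v, g0 v := Finset.sum_le_sum (fun v _ => hg1 v)
  have hsd : Hypergraph.signedDiscrepancy E ≤ ∑ v, SDAux.rep E f v := csInf_le hbdd hmem
  have hrepX : ((∑ v, SDAux.rep E f v : ℤ) : ℝ) ≤ X f := by
    have h1 := SDAux.rep_sum_le E f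
    have h2 : ((∑ v, SDAux.gee f v +
        2 * ∑ i, (if SDAux.bad E f i then ((E i).card : ℤ) else 0) : ℤ) : ℝ) = X f := by
      rw [hX]
      push_cast [apply_ite (fun z : ℤ => (z : ℝ))]
      norm_num
    calc ((∑ v, SDAux.rep E f v : ℤ) : ℝ) ≤
        ((∑ v, SDAux.gee f v +
          2 * ∑ i, (if SDAux.bad E f i then ((E i).card : ℤ) else 0) : ℤ) : ℝ) := by
          exact_mod_cast h1
      _ = X f := h2
  have hfinal : 2 * δ * n ≤ 4 * Real.sqrt (Real.log K / K) * n := by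
    have hsplit : δ ≤ 2 * Real.sqrt (Real.log K / K) := by
      rw [hδdef, show 2 * Real.log K / K = 2 * (Real.log K / K) from by ring,
        Real.sqrt_mul (by norm_num : (0:ℝ) ≤ 2)]
      have h2 : Real.sqrt 2 ≤ 2 := by
        nlinarith [Real.sq_sqrt (show (0:ℝ) ≤ 2 by norm_num), Real.sqrt_nonneg 2]
      have h0 : 0 ≤ Real.sqrt (Real.log K / K) := Real.sqrt_nonneg _
      nlinarith
    have hn0 : (0:ℝ) ≤ n := Nat.cast_nonneg n
    nlinarith
  calc (Hypergraph.signedDiscrepancy E : ℝ) ≤ ((∑ v, SDAux.rep E f v : ℤ) : ℝ) := by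
        exact_mod_cast hsd
    _ ≤ X f := hrepX
    _ ≤ 2 * δ * n + m / K := hf
    _ ≤ 4 * Real.sqrt (Real.log K / K) * n + m / K := by linarith
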